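/- arXiv:2305.19895 — 5 statements merged into one kernel-verified Lean document; each statement's English description precedes it below -/
import Mathlib

section
/- For a fixed positive integer n and r variables, the intersection of the ideal (ξ₁ⁿ, ..., ξᵣⁿ) in ℤ[ξ₁,...,ξᵣ] with the subring of symmetric polynomials equals the ideal of the symmetric polynomial ring generated by the monomial symmetric polynomials m_λ(ξ₁,...,ξᵣ) over all partitions λ with largest part λ₁ ≥ n. -/
open MvPolynomial

section Aux

variable {r : ℕ}

def shape (d : Fin r →₀ ℕ) : Multiset ℕ := d.support.val.map d

def vals (d : Fin r →₀ ℕ) : Multiset ℕ := Finset.univ.val.map d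

lemma shape_pos {d : Fin r →₀ ℕ} {a : ℕ} (ha : a ∈ shape d) : 0 < a := by
  obtain ⟨i, hi, rfl⟩ := Multiset.mem_map.mp ha
  exact Nat.pos_of_ne_zero (Finsupp.mem_support_iff.mp hi)

lemma shape_sum (d : Fin r →₀ ℕ) : (shape d).sum = d.sum (fun _ x => x) := by
  rw [shape, Finsupp.sum]; rfl

lemma card_shape (d : Fin r →₀ ℕ) : Multiset.card (shape d) = d.support.card := by
  simp [shape]

lemma vals_eq (d : Fin r →₀ ℕ) :
    vals d = shape d + Multiset.replicate (r - d.support.card) 0 := by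
  classical
  have hsupp : d.support.val = Multiset.filter (fun i => d i ≠ 0) Finset.univ.val := by
    rw [← Finset.filter_val]; congr 1; ext i; simp [Finsupp.mem_support_iff]
  have h1 : Finset.univ.val =
      Multiset.filter (fun i => d i ≠ 0) Finset.univ.val
        + Multiset.filter (fun i => ¬ d i ≠ 0) Finset.univ.val :=
    (Multiset.filter_add_not _ _).symm
  rw [vals, h1, Multiset.map_add, shape, hsupp]
  congr 1
  rw [Multiset.eq_replicate]
  constructor
  · rw [Multiset.card_map]
    have hcard := congrArg Multiset.card h1
    rw [Multiset.card_add] at hcard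
    have hs : d.support.card = Multiset.card (Multiset.filter (fun i => d i ≠ 0) Finset.univ.val) := by
      rw [← hsupp]; rfl
    have hu : Multiset.card (Finset.univ.val (α := Fin r)) = r := by simp
    omega
  · intro b hb
    obtain ⟨i, hi, rfl⟩ := Multiset.mem_map.mp hb
    have := (Multiset.mem_filter.mp hi).2
    exact not_not.mp this

lemma exists_perm {d e : Fin r →₀ ℕ} (h : vals d = vals e) :
    ∃ π : Equiv.Perm (Fin r), ∀ i, d (π i) = e i := by
  have hp : List.Perm (List.ofFn ⇑d) (List.ofFn ⇑e) := by
    rw [← Multiset.coe_eq_coe]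
    simpa [vals, Fin.univ_val_map] using h
  set σ := Tuple.sort ⇑d with hσ
  set τ := Tuple.sort ⇑e with hτ
  have hperm : List.Perm (List.ofFn (⇑d ∘ ⇑σ)) (List.ofFn (⇑e ∘ ⇑τ)) :=
    ((σ.ofFn_comp_perm ⇑d).trans hp).trans (τ.ofFn_comp_perm ⇑e).symm
  have heq : ⇑d ∘ σ = ⇑e ∘ τ := by
    apply List.ofFn_injective
    exact hperm.eq_of_sortedLE
      (Tuple.monotone_sort ⇑d).sortedLE_ofFn (Tuple.monotone_sort ⇑e).sortedLE_ofFn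
  refine ⟨τ.symm.trans σ, fun i => ?_⟩
  have := congrFun heq (τ.symm i)
  simpa using this

lemma coeff_eq_of_shape {f : MvPolynomial (Fin r) ℤ} (hf : f.IsSymmetric)
    {d e : Fin r →₀ ℕ} (h : shape d = shape e) : coeff d f = coeff e f := by
  have hv : vals d = vals e := by
    rw [vals_eq, vals_eq, h]
    have : d.support.card = e.support.card := by
      rw [← card_shape, ← card_shape, h]
    rw [this]
  obtain ⟨π, hπ⟩ := exists_perm hv
  have he : e = Finsupp.mapDomain ⇑π.symm d := by
    ext j
    have h1 : Finsupp.mapDomain ⇑π.symm d (π.symm (π j)) = d (π j) :=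
      Finsupp.mapDomain_apply π.symm.injective d (π j)
    rw [Equiv.symm_apply_apply] at h1
    rw [h1, hπ]
  rw [he]
  conv_rhs => rw [← hf π.symm]
  exact (coeff_rename_mapDomain _ π.symm.injective f d).symm

lemma prod_map_X (m : Multiset (Fin r)) :
    (m.map (X : Fin r → MvPolynomial (Fin r) ℤ)).prod = monomial (Multiset.toFinsupp m) 1 := by
  induction m using Multiset.induction with
  | empty => simp
  | cons a m ih =>
      have : a ::ₘ m = {a} + m := by rw [Multiset.singleton_add]
      rw [Multiset.map_cons, Multiset.prod_cons, ih, this, Multiset.toFinsupp_add,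
        Multiset.toFinsupp_singleton, X, monomial_mul, one_mul]

lemma ofSym_parts {N : ℕ} (s : Sym (Fin r) N) :
    (Nat.Partition.ofSym s).parts = shape (Multiset.toFinsupp s.1) := by
  show Multiset.map _ (Multiset.dedup _) = _
  rw [shape, Multiset.toFinsupp_support, Multiset.toFinset_val]
  exact Multiset.map_congr rfl fun a _ => (Multiset.toFinsupp_apply _ _).symm

lemma coeff_msymm {N : ℕ} (μ : N.Partition) (d : Fin r →₀ ℕ) :
    coeff d (msymm (Fin r) ℤ μ) = if shape d = μ.parts then 1 else 0 := by
  classical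
  rw [msymm, coeff_sum]
  simp_rw [prod_map_X, coeff_monomial]
  split_ifs with h
  · have hN : Multiset.card (Finsupp.toMultiset d) = N := by
      rw [Finsupp.card_toMultiset]
      have := congrArg Multiset.sum h
      rw [shape_sum] at this
      rw [show (d.sum fun _ => id) = d.sum fun _ x => x from rfl, this, μ.parts_sum]
    have hs₀ : Nat.Partition.ofSym (⟨Finsupp.toMultiset d, hN⟩ : Sym (Fin r) N) = μ := by
      ext1
      refine (ofSym_parts _).trans ?_
      show shape (Multiset.toFinsupp (Finsupp.toMultiset d)) = μ.parts
      rw [Finsupp.toMultiset_toFinsupp, h]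
    set s₀ : {a : Sym (Fin r) N // Nat.Partition.ofSym a = μ} :=
      ⟨⟨Finsupp.toMultiset d, hN⟩, hs₀⟩ with hs₀def
    rw [Fintype.sum_eq_single s₀]
    · show (if Multiset.toFinsupp s₀.1.1 = d then (1:ℤ) else 0) = 1
      rw [if_pos]
      show Multiset.toFinsupp (Finsupp.toMultiset d) = d
      exact Finsupp.toMultiset_toFinsupp d
    · intro x hx
      show (if Multiset.toFinsupp x.1.1 = d then (1:ℤ) else 0) = 0
      rw [if_neg]
      intro hc
      apply hx
      have : x.1.1 = Finsupp.toMultiset d := by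
        rw [Multiset.toFinsupp_eq_iff] at hc
        exact hc
      apply Subtype.ext
      apply Subtype.ext
      exact this
  · apply Finset.sum_eq_zero
    intro x _
    show (if Multiset.toFinsupp x.1.1 = d then (1:ℤ) else 0) = 0
    rw [if_neg]
    intro hc
    apply h
    have := ofSym_parts x.1
    rw [hc, x.2] at this
    exact this.symm

lemma key {n : ℕ} (hn : 0 < n) (k : ℕ) :
    ∀ x : symmetricSubalgebra (Fin r) ℤ,
      (x : MvPolynomial (Fin r) ℤ).support.card ≤ k →
      (∀ d ∈ (x : MvPolynomial (Fin r) ℤ).support, ∃ i, n ≤ d i) →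
      x ∈ Ideal.span {p : symmetricSubalgebra (Fin r) ℤ |
        ∃ (N : ℕ) (μ : N.Partition), (∃ a ∈ μ.parts, n ≤ a) ∧
          (p : MvPolynomial (Fin r) ℤ) = msymm (Fin r) ℤ μ} := by
  induction k with
  | zero =>
    intro x hcard _
    have : (x : MvPolynomial (Fin r) ℤ) = 0 := by
      rw [← MvPolynomial.support_eq_empty, ← Finset.card_eq_zero]
      omega
    have hx : x = 0 := Subtype.ext this
    rw [hx]; exact zero_mem _
  | succ k ih =>
    intro x hcard hsupp
    by_cases h0 : (x : MvPolynomial (Fin r) ℤ) = 0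
    · rw [show x = 0 from Subtype.ext (by simpa using h0)]; exact zero_mem _
    obtain ⟨d, hd⟩ := (MvPolynomial.support_nonempty.mpr h0).exists_mem
    set f : MvPolynomial (Fin r) ℤ := (x : MvPolynomial (Fin r) ℤ) with hfdef
    have hf : f.IsSymmetric := (mem_symmetricSubalgebra f).mp x.2
    set μ : ((shape d).sum).Partition := ⟨shape d, fun {a} ha => shape_pos ha, rfl⟩ with hμ
    set c : ℤ := coeff d f with hc
    set m : symmetricSubalgebra (Fin r) ℤ :=
      ⟨msymm (Fin r) ℤ μ, (mem_symmetricSubalgebra _).mpr (msymm_isSymmetric _ _ μ)⟩ with hm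
    set z : symmetricSubalgebra (Fin r) ℤ := (algebraMap ℤ _ c) * m with hz
    have hzval : (z : MvPolynomial (Fin r) ℤ) = MvPolynomial.C c * msymm (Fin r) ℤ μ := rfl
    set y : symmetricSubalgebra (Fin r) ℤ := x - z with hy
    have hyval : (y : MvPolynomial (Fin r) ℤ) = f - MvPolynomial.C c * msymm (Fin r) ℤ μ := by
      rw [hy]; push_cast [hzval]; rfl
    have hycoeff : ∀ e, coeff e (y : MvPolynomial (Fin r) ℤ)
        = coeff e f - c * (if shape e = shape d then 1 else 0) := by
      intro e
      rw [hyval, coeff_sub, coeff_C_mul, coeff_msymm]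
    have hysupp : (y : MvPolynomial (Fin r) ℤ).support ⊆ f.support.erase d := by
      intro e he
      rw [mem_support_iff, hycoeff] at he
      by_cases hsh : shape e = shape d
      · exfalso
        rw [if_pos hsh, coeff_eq_of_shape hf hsh, ← hc, mul_one, sub_self] at he
        exact he rfl
      · rw [if_neg hsh, mul_zero, sub_zero] at he
        refine Finset.mem_erase.mpr ⟨?_, mem_support_iff.mpr he⟩
        rintro rfl; exact hsh rfl
    have hymem : y ∈ Ideal.span {p : symmetricSubalgebra (Fin r) ℤ |
        ∃ (N : ℕ) (μ : N.Partition), (∃ a ∈ μ.parts, n ≤ a) ∧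
          (p : MvPolynomial (Fin r) ℤ) = msymm (Fin r) ℤ μ} := by
      apply ih
      · calc (y : MvPolynomial (Fin r) ℤ).support.card ≤ (f.support.erase d).card :=
              Finset.card_le_card hysupp
          _ ≤ f.support.card - 1 := le_of_eq (Finset.card_erase_of_mem hd)
          _ ≤ k := by
              have : 1 ≤ f.support.card := Finset.card_pos.mpr ⟨d, hd⟩
              omega
      · intro e he
        exact hsupp e (Finset.mem_of_mem_erase (hysupp he))
    have hmmem : m ∈ {p : symmetricSubalgebra (Fin r) ℤ |
        ∃ (N : ℕ) (μ : N.Partition), (∃ a ∈ μ.parts, n ≤ a) ∧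
          (p : MvPolynomial (Fin r) ℤ) = msymm (Fin r) ℤ μ} := by
      refine ⟨(shape d).sum, μ, ?_, rfl⟩
      obtain ⟨i, hi⟩ := hsupp d hd
      have hipos : i ∈ d.support := by
        rw [Finsupp.mem_support_iff]
        omega
      exact ⟨d i, Multiset.mem_map_of_mem _ hipos, hi⟩
    have : x = y + z := by rw [hy]; ring
    rw [this]
    exact add_mem hymem (Ideal.mul_mem_left _ _ (Ideal.subset_span hmmem))

lemma gens_eq (n : ℕ) : {f : MvPolynomial (Fin r) ℤ | ∃ i : Fin r, f = X i ^ n}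
    = (fun s => monomial s (1:ℤ)) '' {s : Fin r →₀ ℕ | ∃ i : Fin r, s = Finsupp.single i n} := by
  ext f
  constructor
  · rintro ⟨i, rfl⟩
    exact ⟨Finsupp.single i n, ⟨i, rfl⟩, (X_pow_eq_monomial).symm⟩
  · rintro ⟨s, ⟨i, rfl⟩, rfl⟩
    exact ⟨i, X_pow_eq_monomial.symm⟩

theorem stmt0_aux (n r : ℕ) (hn : 0 < n) :
    Ideal.comap (symmetricSubalgebra (Fin r) ℤ).val.toRingHom
        (Ideal.span {f : MvPolynomial (Fin r) ℤ | ∃ i : Fin r, f = X i ^ n}) =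
      Ideal.span {p : symmetricSubalgebra (Fin r) ℤ |
        ∃ (N : ℕ) (μ : N.Partition), (∃ a ∈ μ.parts, n ≤ a) ∧
          (p : MvPolynomial (Fin r) ℤ) = msymm (Fin r) ℤ μ} := by
  apply le_antisymm
  · intro x hx
    rw [Ideal.mem_comap, gens_eq, mem_ideal_span_monomial_image] at hx
    apply key hn (x : MvPolynomial (Fin r) ℤ).support.card x le_rfl
    intro d hd
    obtain ⟨si, ⟨i, rfl⟩, hle⟩ := hx d hd
    exact ⟨i, Finsupp.single_le_iff.mp hle⟩
  · rw [Ideal.span_le]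
    rintro p ⟨N, μ, ⟨a, ha, hna⟩, hp⟩
    rw [SetLike.mem_coe, Ideal.mem_comap, gens_eq, mem_ideal_span_monomial_image]
    intro e he
    rw [mem_support_iff] at he
    have hsh : shape e = μ.parts := by
      by_contra hc
      apply he
      show coeff e (p : MvPolynomial (Fin r) ℤ) = 0
      rw [hp, coeff_msymm, if_neg hc]
    rw [← hsh] at ha
    obtain ⟨i, _, rfl⟩ := Multiset.mem_map.mp ha
    exact ⟨Finsupp.single i n, ⟨i, rfl⟩, Finsupp.single_le_iff.mpr hna⟩

end Aux

/-- For fixed `n > 0`, the intersection of the ideal `(ξ₁ⁿ, …, ξᵣⁿ)` of `ℤ[ξ₁,…,ξᵣ]`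
with the subring of symmetric polynomials equals the ideal of the symmetric polynomial
ring generated by the monomial symmetric polynomials `m_λ` over partitions `λ` with
largest part `≥ n`. -/
theorem stmt0 (n r : ℕ) (hn : 0 < n) :
    Ideal.comap (symmetricSubalgebra (Fin r) ℤ).val.toRingHom
        (Ideal.span {f : MvPolynomial (Fin r) ℤ | ∃ i : Fin r, f = X i ^ n}) =
      Ideal.span {p : symmetricSubalgebra (Fin r) ℤ |
        ∃ (N : ℕ) (μ : N.Partition), (∃ a ∈ μ.parts, n ≤ a) ∧
          (p : MvPolynomial (Fin r) ℤ) = msymm (Fin r) ℤ μ} := by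
  exact stmt0_aux n r hn
end

section
/- With notation as follows, for every k ≥ n the identity p̃_k(h|y) = Σ_{i=0}^{k-1} binom(k-n, i) y₀^i p_{k-i}(c|y) holds in Λ[y₁,...,yₙ]. -/
/-- Substitution of a power series `g` with zero constant term into `F`. -/
noncomputable def substS {R : Type*} [CommRing R] (g F : PowerSeries R) : PowerSeries R :=
  PowerSeries.mk fun n =>
    ∑ k ∈ Finset.range (n + 1), PowerSeries.coeff k F * PowerSeries.coeff n (g ^ k)

/-- The ring `Λ[y₁,…,yₙ]`: `X (inl k)` is `c_k` (`k ≥ 1`), `X (inr i)` is `y_{i+1}`. -/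
abbrev Lam (n : ℕ) := MvPolynomial (ℕ ⊕ Fin n) ℤ

noncomputable def cL (n : ℕ) : ℕ → Lam n :=
  fun k => if k = 0 then 1 else MvPolynomial.X (.inl k)

noncomputable def yL (n : ℕ) : Fin n → Lam n := fun i => MvPolynomial.X (.inr i)

/-- `y₀ = yₙ`. -/
noncomputable def y0L (n : ℕ) : Lam n :=
  if h : 0 < n then yL n ⟨n - 1, Nat.sub_lt h one_pos⟩ else 0

/-- `C(t) = Σ c_k t^k`. -/
noncomputable def CL (n : ℕ) : PowerSeries (Lam n) := PowerSeries.mk (cL n)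

/-- `t/(1 - y₀t)`. -/
noncomputable def gL (n : ℕ) : PowerSeries (Lam n) :=
  PowerSeries.mk fun m => if m = 0 then 0 else y0L n ^ (m - 1)

/-- `H(t) = C(t/(1-y₀t))`. -/
noncomputable def HL (n : ℕ) : PowerSeries (Lam n) := substS (gL n) (CL n)

/-- `E(t) = Π_{i=1}^n (1 + y_i t)`. -/
noncomputable def EL (n : ℕ) : PowerSeries (Lam n) :=
  ∏ i : Fin n, (1 + PowerSeries.C (yL n i) * PowerSeries.X)

/-- `Ẽ(t) = Π_{i=1}^n (1 + (y_i - y₀) t)`. -/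
noncomputable def EtL (n : ℕ) : PowerSeries (Lam n) :=
  ∏ i : Fin n, (1 + PowerSeries.C (yL n i - y0L n) * PowerSeries.X)

namespace Stmt6Aux
open PowerSeries Finset
variable {R : Type*} [CommRing R]

lemma coeff_mul_congr (h f f' : R⟦X⟧) (m : ℕ) (H : ∀ j, j ≤ m → coeff j f = coeff j f') :
    coeff m (h * f) = coeff m (h * f') := by
  rw [coeff_mul, coeff_mul]
  refine Finset.sum_congr rfl fun x hx => ?_
  rw [Finset.HasAntidiagonal.mem_antidiagonal] at hx
  rw [H x.2 (by omega)]

lemma coeff_substS (g F : R⟦X⟧) (m : ℕ) :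
    coeff m (substS g F) = ∑ k ∈ Finset.range (m + 1), coeff k F * coeff m (g ^ k) := by
  simp [substS]

variable {g : R⟦X⟧}

set_option linter.deprecated false in
lemma coeff_dF (f : R⟦X⟧) (n : ℕ) :
    coeff n f.derivativeFun = coeff (n + 1) f * (n + 1) := coeff_derivative f n

set_option linter.deprecated false in
lemma dF_C (r : R) : PowerSeries.derivativeFun (C r) = 0 := derivative_C

def HG (g : R⟦X⟧) : Prop := ∀ m k, m < k → PowerSeries.coeff m (g ^ k) = 0

lemma coeff_eval₂ (hg : HG g) (P : Polynomial R) (m : ℕ) :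
    coeff m (Polynomial.eval₂ (C (R := R)) g P) =
      ∑ k ∈ Finset.range (m + 1), P.coeff k * coeff m (g ^ k) := by
  rw [Polynomial.eval₂_eq_sum_range, map_sum]
  simp only [coeff_C_mul]
  rcases le_or_gt (P.natDegree + 1) (m + 1) with h | h
  · exact Finset.sum_subset (Finset.range_subset_range.2 h) (fun x hx hx' => by
      rw [Polynomial.coeff_eq_zero_of_natDegree_lt (by simp only [mem_range] at hx hx' ⊢; omega),
        zero_mul])
  · exact (Finset.sum_subset (Finset.range_subset_range.2 h.le) (fun x hx hx' => by
      rw [hg m x (by simp only [mem_range] at hx hx' ⊢; omega), mul_zero])).symm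

lemma coeff_eval₂_trunc (hg : HG g) (F : R⟦X⟧) {j N : ℕ} (h : j < N) :
    coeff j (Polynomial.eval₂ (C (R := R)) g (trunc N F)) = coeff j (substS g F) := by
  rw [coeff_eval₂ hg, coeff_substS]
  refine Finset.sum_congr rfl fun k hk => ?_
  rw [coeff_trunc, if_pos (by simp only [mem_range] at hk; omega)]

lemma substS_mul (hg : HG g) (A B : R⟦X⟧) : substS g (A * B) = substS g A * substS g B := by
  ext m
  have h1 : coeff m (substS g (A * B)) =
      coeff m (Polynomial.eval₂ (C (R := R)) g (trunc (m + 1) A * trunc (m + 1) B)) := by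
    rw [coeff_substS, coeff_eval₂ hg]
    refine Finset.sum_congr rfl fun k hk => ?_
    rw [coeff_mul_eq_coeff_trunc_mul_trunc A B (mem_range.mp hk), ← Polynomial.coe_mul, Polynomial.coeff_coe]
  rw [h1, Polynomial.eval₂_mul, coeff_mul, coeff_mul]
  refine Finset.sum_congr rfl fun x hx => ?_
  rw [Finset.HasAntidiagonal.mem_antidiagonal] at hx
  rw [coeff_eval₂_trunc hg A (show x.1 < m + 1 by omega),
    coeff_eval₂_trunc hg B (show x.2 < m + 1 by omega)]

lemma substS_one : substS g (1 : R⟦X⟧) = 1 := by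
  ext m
  rw [coeff_substS]
  rw [Finset.sum_eq_single 0]
  · simp
  · intro b _ hb
    simp [coeff_one, hb]
  · simp

lemma substS_add (A B : R⟦X⟧) : substS g (A + B) = substS g A + substS g B := by
  ext m
  simp [coeff_substS, add_mul, Finset.sum_add_distrib]

lemma substS_C_mul (a : R) (F : R⟦X⟧) : substS g (C a * F) = C a * substS g F := by
  ext m
  simp [coeff_substS, mul_sum, mul_assoc]

lemma substS_X (hg : HG g) : substS g (X : R⟦X⟧) = g := by
  ext m
  rw [coeff_substS]
  rcases Nat.eq_zero_or_pos m with rfl | hm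
  · rw [Finset.range_one, Finset.sum_singleton]
    have := hg 0 1 one_pos
    rw [pow_one] at this
    simp [this]
  · rw [Finset.sum_eq_single 1]
    · simp [pow_one]
    · intro b _ hb
      rcases b with _ | _ | b <;> simp_all [coeff_X]
    · intro h
      simp only [mem_range] at h
      omega



section UIG
variable (y0 : R)

noncomputable def iu (y0 : R) : R⟦X⟧ := PowerSeries.mk fun m => y0 ^ m
noncomputable def uu (y0 : R) : R⟦X⟧ := 1 - C y0 * X
noncomputable def gg (y0 : R) : R⟦X⟧ := X * iu y0

lemma coeff_iu (m : ℕ) : coeff m (iu y0) = y0 ^ m := by simp [iu]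

lemma coeff_X_mul_iu (m : ℕ) :
    coeff m (X * iu y0) = if m = 0 then 0 else y0 ^ (m - 1) := by
  rw [show (X : R⟦X⟧) = X ^ 1 by rw [pow_one], coeff_X_pow_mul', coeff_iu]
  rcases m with _ | m <;> simp

lemma uu_mul_iu : uu y0 * iu y0 = 1 := by
  ext m
  rw [uu, sub_mul, one_mul, mul_assoc, map_sub, coeff_C_mul, coeff_X_mul_iu, coeff_iu]
  rcases m with _ | m <;> simp [pow_succ, mul_comm]

lemma hg_gg : HG (gg y0) := by
  intro m k h
  rw [gg, mul_pow, coeff_X_pow_mul', if_neg (by omega)]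

lemma d_gg : PowerSeries.derivativeFun (gg y0) = iu y0 * iu y0 := by
  ext m
  rw [coeff_dF, gg, coeff_X_mul_iu, coeff_mul]
  simp only [coeff_iu, if_neg (Nat.succ_ne_zero m), Nat.add_sub_cancel]
  rw [Finset.sum_congr rfl (fun x hx => show y0 ^ x.1 * y0 ^ x.2 = y0 ^ m by
    rw [← pow_add]; rw [Finset.HasAntidiagonal.mem_antidiagonal] at hx; rw [hx]), Finset.sum_const,
    Finset.Nat.card_antidiagonal, nsmul_eq_mul, mul_comm]
  push_cast
  ring

lemma uu_sq_mul_d_gg : uu y0 ^ 2 * PowerSeries.derivativeFun (gg y0) = 1 := by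
  rw [d_gg, show uu y0 ^ 2 * (iu y0 * iu y0) = (uu y0 * iu y0) * (uu y0 * iu y0) by ring,
    uu_mul_iu, one_mul]

lemma derivativeFun_C_mul (a : R) (f : R⟦X⟧) :
    PowerSeries.derivativeFun (C a * f) = C a * PowerSeries.derivativeFun f := by
  rw [PowerSeries.derivativeFun_mul, dF_C, smul_zero, add_zero,
    smul_eq_mul]

lemma derivativeFun_sum {ι : Type*} (s : Finset ι) (f : ι → R⟦X⟧) :
    PowerSeries.derivativeFun (∑ i ∈ s, f i) = ∑ i ∈ s, (f i).derivativeFun := by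
  classical
  induction s using Finset.induction_on with
  | empty =>
      rw [Finset.sum_empty, Finset.sum_empty, ← map_zero (C (R := R)),
        dF_C]
      exact (map_zero (C (R := R))).symm
  | insert _ _ h ih =>
      rw [Finset.sum_insert h, Finset.sum_insert h, PowerSeries.derivativeFun_add, ih]

lemma uu_sq_mul_d_pow : ∀ k : ℕ,
    uu y0 ^ 2 * PowerSeries.derivativeFun (gg y0 ^ (k + 1)) =
      C ((k + 1 : ℕ) : R) * gg y0 ^ k
  | 0 => by
      rw [pow_one, uu_sq_mul_d_gg, pow_zero, mul_one, show (0 + 1 : ℕ) = 1 from rfl,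
        Nat.cast_one, map_one]
  | (k + 1) => by
      rw [show gg y0 ^ (k+1+1) = gg y0 ^ (k+1) * gg y0 from pow_succ _ _,
        PowerSeries.derivativeFun_mul, smul_eq_mul, smul_eq_mul, mul_add,
        show uu y0 ^ 2 * (gg y0 ^ (k+1) * PowerSeries.derivativeFun (gg y0)) =
          gg y0 ^ (k+1) * (uu y0 ^ 2 * PowerSeries.derivativeFun (gg y0)) by ring,
        uu_sq_mul_d_gg,
        show uu y0 ^ 2 * (gg y0 * PowerSeries.derivativeFun (gg y0 ^ (k+1))) =
          gg y0 * (uu y0 ^ 2 * PowerSeries.derivativeFun (gg y0 ^ (k+1))) by ring,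
        uu_sq_mul_d_pow k,
        show ((k + 1 + 1 : ℕ) : R) = 1 + ((k + 1 : ℕ) : R) by push_cast; ring, map_add, map_one]
      ring

end UIG


lemma coeff_substS_sum {g : R⟦X⟧} (hg : HG g) (F : R⟦X⟧) {j N : ℕ} (h : j < N) :
    coeff j (substS g F) = coeff j (∑ k ∈ Finset.range N, C (coeff k F) * g ^ k) := by
  rw [coeff_substS, map_sum]
  simp only [coeff_C_mul]
  refine Finset.sum_subset (Finset.range_subset_range.2 (by omega)) fun x _ hx' => ?_
  rw [hg j x (by simp only [Finset.mem_range] at hx'; omega), mul_zero]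

lemma chain (y0 : R) (F : R⟦X⟧) :
    uu y0 ^ 2 * PowerSeries.derivativeFun (substS (gg y0) F) =
      substS (gg y0) (PowerSeries.derivativeFun F) := by
  ext m
  rw [coeff_mul_congr (uu y0 ^ 2) _
      (PowerSeries.derivativeFun (∑ k ∈ Finset.range (m + 2), C (coeff k F) * gg y0 ^ k)) m
      (fun j hj => by
        rw [coeff_dF, coeff_dF,
          coeff_substS_sum (hg_gg y0) F (show j + 1 < m + 2 by omega)]),
    derivativeFun_sum, Finset.mul_sum, map_sum]
  have e1 : ∀ k : ℕ, coeff m (uu y0 ^ 2 * (C (coeff k F) * gg y0 ^ k).derivativeFun)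
      = coeff m (C (coeff k F) * (uu y0 ^ 2 * (gg y0 ^ k).derivativeFun)) := fun k => by
    rw [show uu y0 ^ 2 * (C (coeff k F) * gg y0 ^ k).derivativeFun
        = C (coeff k F) * (uu y0 ^ 2 * (gg y0 ^ k).derivativeFun) from by
      rw [derivativeFun_C_mul]; ring]
  rw [Finset.sum_congr rfl fun k _ => e1 k, Finset.sum_range_succ']
  rw [show coeff m (C (coeff 0 F) * (uu y0 ^ 2 * (gg y0 ^ 0).derivativeFun)) = 0 from by
    rw [pow_zero, PowerSeries.derivativeFun_one, mul_zero, mul_zero, map_zero], add_zero]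
  rw [coeff_substS]
  refine Finset.sum_congr rfl fun k _ => ?_
  rw [uu_sq_mul_d_pow y0 k, coeff_C_mul, coeff_C_mul, coeff_dF]
  push_cast
  ring



lemma substS_prod {g : R⟦X⟧} (hg : HG g) {ι : Type*} (s : Finset ι) (f : ι → R⟦X⟧) :
    substS g (∏ i ∈ s, f i) = ∏ i ∈ s, substS g (f i) := by
  classical
  induction s using Finset.induction_on with
  | empty => simpa using substS_one (g := g)
  | insert _ _ h ih => rw [Finset.prod_insert h, Finset.prod_insert h, substS_mul hg, ih]

lemma uu_mul_substS_lin (y0 a : R) :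
    uu y0 * substS (gg y0) (1 + C a * X) = 1 + C (a - y0) * X := by
  rw [substS_add, substS_one, substS_C_mul, substS_X (hg_gg y0), gg, mul_add, mul_one,
    show uu y0 * (C a * (X * iu y0)) = C a * X * (uu y0 * iu y0) from by ring,
    uu_mul_iu, mul_one, uu, map_sub]
  ring

lemma coeff_mul_substS {g : R⟦X⟧} (hg : HG g) (W F : R⟦X⟧) (m : ℕ) :
    coeff m (W * substS g F) =
      ∑ a ∈ Finset.range (m + 1), coeff a F * coeff m (W * g ^ a) := by
  rw [coeff_mul_congr W _ (∑ k ∈ Finset.range (m + 1), C (coeff k F) * g ^ k) m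
      (fun j hj => coeff_substS_sum hg F (by omega)), Finset.mul_sum, map_sum]
  exact Finset.sum_congr rfl fun a _ => by
    rw [show W * (C (coeff a F) * g ^ a) = C (coeff a F) * (W * g ^ a) from by ring,
      coeff_C_mul]

lemma uu_eq_coe (y0 : R) :
    uu y0 = ((1 - Polynomial.C y0 * Polynomial.X : Polynomial R) : R⟦X⟧) := by
  rw [uu, Polynomial.coe_sub, Polynomial.coe_one, Polynomial.coe_mul, Polynomial.coe_C,
    Polynomial.coe_X]

lemma coeff_uu_pow (y0 : R) {d j : ℕ} (h : d < j) : coeff j (uu y0 ^ d) = 0 := by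
  rw [uu_eq_coe, ← Polynomial.coe_pow, Polynomial.coeff_coe]
  apply Polynomial.coeff_eq_zero_of_natDegree_lt
  calc ((1 - Polynomial.C y0 * Polynomial.X : Polynomial R) ^ d).natDegree
      ≤ d * (1 - Polynomial.C y0 * Polynomial.X : Polynomial R).natDegree :=
        Polynomial.natDegree_pow_le
    _ ≤ d * 1 := by
        refine Nat.mul_le_mul_left d ?_
        refine le_trans (Polynomial.natDegree_sub_le _ _) ?_
        simp only [Polynomial.natDegree_one, max_le_iff]
        exact ⟨Nat.zero_le _, le_trans (Polynomial.natDegree_C_mul_le _ _)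
          Polynomial.natDegree_X_le⟩
    _ < j := by omega

lemma hockey (s : ℕ) : ∀ j : ℕ,
    ∑ k ∈ Finset.range (j + 1), (k + s).choose k = (j + s + 1).choose j
  | 0 => by simp
  | (j + 1) => by
      rw [Finset.sum_range_succ, hockey s j, show j + 1 + s = j + s + 1 from by omega]
      exact (Nat.choose_succ_succ (j + s + 1) j).symm

lemma coeff_iu_pow (y0 : R) : ∀ (s j : ℕ),
    coeff j (iu y0 ^ (s + 1)) = ((j + s).choose j : R) * y0 ^ j
  | 0, j => by rw [pow_one, coeff_iu]; simp
  | (s + 1), j => by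
      rw [show iu y0 ^ (s + 1 + 1) = iu y0 ^ (s + 1) * iu y0 from pow_succ _ _, coeff_mul,
        Finset.Nat.sum_antidiagonal_eq_sum_range_succ_mk]
      rw [Finset.sum_congr rfl fun k hk => by
        rw [coeff_iu_pow y0 s k, coeff_iu, mul_assoc, ← pow_add,
          show k + (j - k) = j from by simp only [Finset.mem_range] at hk; omega]]
      rw [← Finset.sum_mul, ← Nat.cast_sum, hockey s j,
        show j + s + 1 = j + (s + 1) from by omega]



lemma uu_pow_mul_iu_pow (y0 : R) (n d : ℕ) :
    uu y0 ^ n * iu y0 ^ (n + d) = iu y0 ^ d := by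
  rw [pow_add, ← mul_assoc, ← mul_pow, uu_mul_iu, one_pow, one_mul]

lemma uu_pow_mul_iu_pow' (y0 : R) (d r : ℕ) :
    uu y0 ^ (r + d) * iu y0 ^ r = uu y0 ^ d := by
  rw [pow_add, show uu y0 ^ r * uu y0 ^ d * iu y0 ^ r
      = uu y0 ^ d * ((uu y0 * iu y0) ^ r) from by rw [mul_pow]; ring, uu_mul_iu, one_pow,
    mul_one]

lemma coeff_B (y0 : R) {n k a : ℕ} (hn : 0 < n) (hk : n ≤ k) (ha : a < k) :
    coeff (k - 1) (iu y0 ^ 2 * uu y0 ^ n * gg y0 ^ a)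
      = ((k - n).choose (k - 1 - a) : R) * y0 ^ (k - 1 - a) := by
  rw [gg, mul_pow, show iu y0 ^ 2 * uu y0 ^ n * ((X : R⟦X⟧) ^ a * iu y0 ^ a)
      = X ^ a * (uu y0 ^ n * iu y0 ^ (a + 2)) from by ring,
    coeff_X_pow_mul', if_pos (by omega : a ≤ k - 1)]
  rcases le_or_gt n (a + 1) with hcase | hcase
  · rw [show a + 2 = n + (a + 2 - n) from by omega, uu_pow_mul_iu_pow,
      show a + 2 - n = (a + 1 - n) + 1 from by omega, coeff_iu_pow,
      show k - 1 - a + (a + 1 - n) = k - n from by omega]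
  · rw [show uu y0 ^ n = uu y0 ^ ((a + 2) + (n - a - 2)) from by
        rw [show (a + 2) + (n - a - 2) = n from by omega],
      uu_pow_mul_iu_pow', coeff_uu_pow y0 (show n - a - 2 < k - 1 - a from by omega),
      Nat.choose_eq_zero_of_lt (show k - n < k - 1 - a from by omega), Nat.cast_zero,
      zero_mul]

end Stmt6Aux

open PowerSeries Stmt6Aux

/-- For `k ≥ n`: `p̃_k(h|y) = Σ_{i=0}^{k-1} binom(k-n,i) y₀^i p_{k-i}(c|y)`, where
`Σ p_k t^{k-1} = C'/C`, `Σ p̃_k t^{k-1} = H'/H`, `Σ p_k(c|y) t^{k-1} = (C'/C)·E`,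
`Σ p̃_k(h|y) t^{k-1} = (H'/H)·Ẽ`. -/
theorem stmt6 (n : ℕ) (hn : 0 < n) (p pt pcy phy : ℕ → Lam n)
    (hp : (PowerSeries.mk fun j => p (j + 1)) * CL n = (CL n).derivativeFun)
    (hpt : (PowerSeries.mk fun j => pt (j + 1)) * HL n = (HL n).derivativeFun)
    (hpcy : (PowerSeries.mk fun j => pcy (j + 1)) =
      (PowerSeries.mk fun j => p (j + 1)) * EL n)
    (hphy : (PowerSeries.mk fun j => phy (j + 1)) =
      (PowerSeries.mk fun j => pt (j + 1)) * EtL n)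
    (k : ℕ) (hk : n ≤ k) :
    phy k = ∑ i ∈ Finset.range k, ((k - n).choose i : Lam n) * y0L n ^ i * pcy (k - i) := by
  have hgl : gL n = gg (y0L n) := by
    ext m
    rw [gL, coeff_mk, gg, coeff_X_mul_iu]
  have hHL : HL n = substS (gg (y0L n)) (CL n) := by rw [HL, hgl]
  have hHunit : IsUnit (HL n) := by
    rw [PowerSeries.isUnit_iff_constantCoeff]
    have : constantCoeff (HL n) = 1 := by
      rw [hHL, ← coeff_zero_eq_constantCoeff_apply, coeff_substS]
      simp [CL, cL]
    rw [this]
    exact isUnit_one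
  have key1 : uu (y0L n) ^ 2 * (PowerSeries.mk fun j => pt (j + 1)) =
      substS (gg (y0L n)) (PowerSeries.mk fun j => p (j + 1)) := by
    have e : (uu (y0L n) ^ 2 * (PowerSeries.mk fun j => pt (j + 1))) * HL n =
        substS (gg (y0L n)) (PowerSeries.mk fun j => p (j + 1)) * HL n := by
      calc (uu (y0L n) ^ 2 * (PowerSeries.mk fun j => pt (j + 1))) * HL n
          = uu (y0L n) ^ 2 * ((PowerSeries.mk fun j => pt (j + 1)) * HL n) := by ring
        _ = uu (y0L n) ^ 2 * (HL n).derivativeFun := by rw [hpt]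
        _ = substS (gg (y0L n)) (CL n).derivativeFun := by rw [hHL, chain]
        _ = substS (gg (y0L n)) ((PowerSeries.mk fun j => p (j + 1)) * CL n) := by rw [hp]
        _ = substS (gg (y0L n)) (PowerSeries.mk fun j => p (j + 1)) * HL n := by
            rw [substS_mul (hg_gg _), hHL]
    exact hHunit.mul_right_cancel e
  have key2 : EtL n = uu (y0L n) ^ n * substS (gg (y0L n)) (EL n) := by
    calc EtL n = ∏ i : Fin n, (uu (y0L n) * substS (gg (y0L n)) (1 + C (yL n i) * X)) :=
          Finset.prod_congr rfl fun i _ => (uu_mul_substS_lin (y0L n) (yL n i)).symm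
      _ = (∏ _i : Fin n, uu (y0L n)) * ∏ i : Fin n, substS (gg (y0L n)) (1 + C (yL n i) * X) :=
          Finset.prod_mul_distrib
      _ = uu (y0L n) ^ n * substS (gg (y0L n)) (EL n) := by
          rw [Finset.prod_const, Finset.card_univ, Fintype.card_fin, EL,
            substS_prod (hg_gg _)]
  have h1 : iu (y0L n) ^ 2 * uu (y0L n) ^ 2 = 1 := by
    rw [← mul_pow, mul_comm (iu (y0L n)), uu_mul_iu, one_pow]
  have key3 : (PowerSeries.mk fun j => phy (j + 1)) =
      iu (y0L n) ^ 2 * uu (y0L n) ^ n * substS (gg (y0L n)) (PowerSeries.mk fun j => pcy (j + 1)) := by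
    rw [hphy, hpcy, key2, substS_mul (hg_gg _), ← key1]
    rw [show iu (y0L n) ^ 2 * uu (y0L n) ^ n *
        ((uu (y0L n) ^ 2 * (PowerSeries.mk fun j => pt (j + 1))) *
          substS (gg (y0L n)) (EL n))
        = (iu (y0L n) ^ 2 * uu (y0L n) ^ 2) *
          ((PowerSeries.mk fun j => pt (j + 1)) * (uu (y0L n) ^ n * substS (gg (y0L n)) (EL n)))
        from by ring, h1, one_mul]
  have hk1 : k - 1 + 1 = k := by omega
  have := congrArg (coeff (k - 1)) key3
  rw [coeff_mk, hk1] at this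
  rw [this, coeff_mul_substS (hg_gg _), hk1]
  rw [← Finset.sum_range_reflect (fun i => ((k - n).choose i : Lam n) * y0L n ^ i * pcy (k - i)) k]
  refine Finset.sum_congr rfl fun a ha => ?_
  rw [Finset.mem_range] at ha
  rw [coeff_mk, coeff_B (y0L n) hn hk ha,
    show k - (k - 1 - a) = a + 1 from by omega]
  ring
end

section
/- With notation as follows, for every k ≥ n the identity p_k(c|y) = Σ_{i=0}^{k-1} binom(k-n, i) (-y₀)^i p̃_{k-i}(h|y) holds in Λ[y₁,...,yₙ]. -/
section General
open PowerSeries Finset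
variable {R : Type*} [CommRing R]

lemma coeff_pow_eq_zero' {g : R⟦X⟧} (hg : constantCoeff g = 0)
    {k m : ℕ} (h : m < k) : coeff m (g ^ k) = 0 :=
  (PowerSeries.X_pow_dvd_iff.mp (pow_dvd_pow_of_dvd (PowerSeries.X_dvd_iff.mpr hg) k)) m h

lemma coeff_substS (g F : R⟦X⟧) (m : ℕ) :
    coeff m (substS g F) =
      ∑ k ∈ Finset.range (m + 1), coeff k F * coeff m (g ^ k) := by
  simp [substS]

lemma coeff_eval₂P {g : R⟦X⟧} (hg : constantCoeff g = 0) (P : Polynomial R) (m : ℕ) :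
    coeff m (Polynomial.eval₂ C g P) =
      ∑ k ∈ Finset.range (m + 1), P.coeff k * coeff m (g ^ k) := by
  rw [Polynomial.eval₂_eq_sum_range, map_sum]
  simp_rw [PowerSeries.coeff_C_mul]
  have e1 : ∑ i ∈ range (P.natDegree + 1), P.coeff i * coeff m (g ^ i)
      = ∑ i ∈ range (P.natDegree + 1 + (m + 1)), P.coeff i * coeff m (g ^ i) := by
    apply Finset.sum_subset (Finset.range_subset_range.2 (by omega))
    intro x _ hx
    rw [Polynomial.coeff_eq_zero_of_natDegree_lt (by simp at hx; omega), zero_mul]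
  have e2 : ∑ i ∈ range (m + 1), P.coeff i * coeff m (g ^ i)
      = ∑ i ∈ range (P.natDegree + 1 + (m + 1)), P.coeff i * coeff m (g ^ i) := by
    apply Finset.sum_subset (Finset.range_subset_range.2 (by omega))
    intro x _ hx
    rw [coeff_pow_eq_zero' hg (by simp at hx; omega), mul_zero]
  rw [e1, ← e2]

lemma coeff_substS_eq_eval₂ {g : R⟦X⟧} (hg : constantCoeff g = 0) (F : R⟦X⟧)
    {P : Polynomial R} {m : ℕ} (hP : ∀ k ≤ m, P.coeff k = coeff k F) :
    coeff m (substS g F) = coeff m (Polynomial.eval₂ C g P) := by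
  rw [coeff_substS, coeff_eval₂P hg]
  refine Finset.sum_congr rfl fun k hk => ?_
  rw [hP k (by simpa [Nat.lt_succ_iff] using hk)]

lemma coeff_trunc_of_le (F : R⟦X⟧) {N k : ℕ} (h : k < N) :
    (PowerSeries.trunc N F).coeff k = coeff k F := by
  rw [PowerSeries.coeff_trunc, if_pos h]

lemma substS_mul {g : R⟦X⟧} (hg : constantCoeff g = 0) (F₁ F₂ : R⟦X⟧) :
    substS g (F₁ * F₂) = substS g F₁ * substS g F₂ := by
  ext m
  rw [coeff_substS_eq_eval₂ hg _ (P := (trunc (m+1) F₁) * (trunc (m+1) F₂))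
      (fun k hk => by
        rw [Polynomial.coeff_mul, PowerSeries.coeff_mul]
        refine Finset.sum_congr rfl fun ab hab => ?_
        have := Finset.HasAntidiagonal.mem_antidiagonal.mp hab
        rw [coeff_trunc_of_le _ (by omega), coeff_trunc_of_le _ (by omega)])]
  rw [Polynomial.eval₂_mul, PowerSeries.coeff_mul, PowerSeries.coeff_mul]
  refine Finset.sum_congr rfl fun ab hab => ?_
  have := Finset.HasAntidiagonal.mem_antidiagonal.mp hab
  rw [← coeff_substS_eq_eval₂ hg F₁ (fun k hk => coeff_trunc_of_le _ (by omega)),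
      ← coeff_substS_eq_eval₂ hg F₂ (fun k hk => coeff_trunc_of_le _ (by omega))]

lemma substS_add (g F₁ F₂ : R⟦X⟧) : substS g (F₁ + F₂) = substS g F₁ + substS g F₂ := by
  ext m; simp [coeff_substS, add_mul, Finset.sum_add_distrib]

lemma substS_C (g : R⟦X⟧) (r : R) : substS g (C r) = C r := by
  ext m
  rw [coeff_substS, Finset.sum_eq_single 0]
  · simp [PowerSeries.coeff_C]
  · intro k _ hk
    simp [PowerSeries.coeff_C, hk]
  · simp

lemma substS_one (g : R⟦X⟧) : substS g (1 : R⟦X⟧) = 1 := by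
  simpa using substS_C g 1

lemma substS_X {g : R⟦X⟧} (hg : constantCoeff g = 0) : substS g X = g := by
  ext m
  rw [coeff_substS, Finset.sum_eq_single 1]
  · simp
  · intro k _ hk
    simp [PowerSeries.coeff_X, hk]
  · intro h
    simp only [Finset.mem_range, not_lt] at h
    obtain rfl : m = 0 := by omega
    rw [pow_one, coeff_zero_eq_constantCoeff_apply, hg, mul_zero]

/-- `substS g` as a monoid hom. -/
noncomputable def substSM {g : R⟦X⟧} (hg : constantCoeff g = 0) : R⟦X⟧ →* R⟦X⟧ where
  toFun := substS g
  map_one' := substS_one g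
  map_mul' := substS_mul hg

lemma coeff_derivativeFun' (f : R⟦X⟧) (n : ℕ) :
    coeff n f.derivativeFun = coeff (n + 1) f * (n + 1) := coeff_derivative f n

lemma derivativeFun_C' (r : R) : derivativeFun (C r) = 0 := derivative_C

lemma derivativeFun_pow' (g : R⟦X⟧) (k : ℕ) :
    derivativeFun (g ^ (k + 1)) = ((k : R⟦X⟧) + 1) * g ^ k * derivativeFun g := by
  induction k with
  | zero => simp
  | succ k ih =>
    rw [pow_succ, derivativeFun_mul, ih]
    simp only [smul_eq_mul]
    push_cast
    ring

lemma eval₂_deriv (g : R⟦X⟧) (P : Polynomial R) :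
    derivativeFun (Polynomial.eval₂ C g P) =
      Polynomial.eval₂ C g (Polynomial.derivative P) * derivativeFun g := by
  induction P using Polynomial.induction_on' with
  | add p q hp hq =>
      rw [Polynomial.eval₂_add, derivativeFun_add, hp, hq, map_add, Polynomial.eval₂_add, add_mul]
  | monomial k a =>
    rw [Polynomial.eval₂_monomial, Polynomial.derivative_monomial]
    cases k with
    | zero => simp [derivativeFun_C']
    | succ k =>
      rw [Polynomial.eval₂_monomial, derivativeFun_mul, derivativeFun_pow', derivativeFun_C']
      simp only [smul_eq_mul, smul_zero, mul_zero, add_zero, Nat.add_sub_cancel]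
      rw [map_mul C, map_natCast C]
      push_cast
      ring

lemma substS_deriv {g : R⟦X⟧} (hg : constantCoeff g = 0) (F : R⟦X⟧) :
    derivativeFun (substS g F) = substS g (derivativeFun F) * derivativeFun g := by
  ext m
  rw [coeff_derivativeFun',
      coeff_substS_eq_eval₂ hg F (P := trunc (m+2) F) (fun k hk => coeff_trunc_of_le _ (by omega)),
      ← coeff_derivativeFun', eval₂_deriv, PowerSeries.coeff_mul, PowerSeries.coeff_mul]
  refine Finset.sum_congr rfl fun ab hab => ?_
  have hab' := Finset.HasAntidiagonal.mem_antidiagonal.mp hab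
  rw [← coeff_substS_eq_eval₂ hg F.derivativeFun (fun k hk => by
    rw [Polynomial.coeff_derivative, coeff_trunc_of_le _ (by omega), coeff_derivativeFun'])]

lemma coeff_substS_mul {g : R⟦X⟧} (hg : constantCoeff g = 0) (F Z : R⟦X⟧) (m : ℕ) :
    coeff m (substS g F * Z) =
      ∑ j ∈ Finset.range (m + 1), coeff j F * coeff m (g ^ j * Z) := by
  rw [PowerSeries.coeff_mul]
  have e : ∀ ab ∈ antidiagonal m, coeff ab.1 (substS g F) * coeff ab.2 Z
      = ∑ j ∈ range (m+1), coeff j F * (coeff ab.1 (g^j) * coeff ab.2 Z) := by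
    intro ab hab
    have h := Finset.HasAntidiagonal.mem_antidiagonal.mp hab
    rw [coeff_substS, Finset.sum_mul]
    refine (Finset.sum_subset (Finset.range_subset_range.2 (by omega)) ?_).trans
      (Finset.sum_congr rfl fun j hj => by ring)
    intro x _ hx
    rw [coeff_pow_eq_zero' hg (by simp at hx; omega), mul_zero, zero_mul]
  rw [Finset.sum_congr rfl e, Finset.sum_comm]
  refine Finset.sum_congr rfl fun j hj => ?_
  rw [← Finset.mul_sum, PowerSeries.coeff_mul]

end General

section Specific
open PowerSeries Finset

noncomputable def WL (n : ℕ) : PowerSeries (Lam n) := PowerSeries.mk fun m => y0L n ^ m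
noncomputable def DL (n : ℕ) : PowerSeries (Lam n) := 1 - PowerSeries.C (y0L n) * PowerSeries.X

lemma WD (n : ℕ) : WL n * DL n = 1 := by
  ext m
  rw [DL, mul_sub, mul_one, map_sub,
    show WL n * (PowerSeries.C (y0L n) * X) = (PowerSeries.C (y0L n) * WL n) * X by ring]
  cases m with
  | zero => rw [coeff_zero_mul_X]; simp [WL]
  | succ m =>
      rw [coeff_succ_mul_X, PowerSeries.coeff_C_mul]
      simp [WL, PowerSeries.coeff_one, pow_succ, mul_comm]

lemma GXW (n : ℕ) : gL n = PowerSeries.X * WL n := by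
  ext m
  cases m with
  | zero => rw [mul_comm, coeff_zero_mul_X]; simp [gL]
  | succ m => rw [mul_comm, coeff_succ_mul_X]; simp [gL, WL]

lemma hgG (n : ℕ) : constantCoeff (gL n) = 0 := by
  rw [← coeff_zero_eq_constantCoeff_apply]
  simp [gL]

lemma derivG (n : ℕ) : (gL n).derivativeFun = WL n * WL n := by
  ext m
  rw [coeff_derivativeFun', PowerSeries.coeff_mul]
  have e : ∀ ab ∈ antidiagonal m, coeff ab.1 (WL n) * coeff ab.2 (WL n) = y0L n ^ m := by
    intro ab hab
    have h := Finset.HasAntidiagonal.mem_antidiagonal.mp hab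
    simp only [WL, coeff_mk]
    rw [← pow_add, h]
  rw [Finset.sum_congr rfl e, Finset.sum_const, Finset.Nat.card_antidiagonal]
  simp only [gL, coeff_mk, Nat.succ_ne_zero, if_neg, Nat.add_sub_cancel, nsmul_eq_mul]
  push_cast
  ring_nf

lemma coeff_D_pow (n : ℕ) (j d : ℕ) :
    coeff d ((DL n) ^ j) = (j.choose d : Lam n) * (- y0L n) ^ d := by
  have hD : DL n = PowerSeries.C (- y0L n) * X + 1 := by
    rw [DL, map_neg]; ring
  rw [hD, add_pow, map_sum]
  have e : ∀ i, (PowerSeries.C (- y0L n) * X) ^ i * 1 ^ (j - i) * (j.choose i : (Lam n)⟦X⟧)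
      = PowerSeries.C ((- y0L n) ^ i * (j.choose i : Lam n)) * X ^ i := by
    intro i
    rw [one_pow, mul_pow, ← map_pow, ← map_natCast PowerSeries.C (j.choose i), map_mul]
    ring
  simp_rw [e, PowerSeries.coeff_C_mul_X_pow]
  rw [Finset.sum_ite_eq (range (j+1)) d]
  split_ifs with h
  · ring
  · rw [Nat.choose_eq_zero_of_lt (by simp at h; omega), Nat.cast_zero, zero_mul]

end Specific

open PowerSeries Finset in
/-- For `k ≥ n`: `p_k(c|y) = Σ_{i=0}^{k-1} binom(k-n,i) (-y₀)^i p̃_{k-i}(h|y)`. -/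
theorem stmt7 (n : ℕ) (hn : 0 < n) (p pt pcy phy : ℕ → Lam n)
    (hp : (PowerSeries.mk fun j => p (j + 1)) * CL n = (CL n).derivativeFun)
    (hpt : (PowerSeries.mk fun j => pt (j + 1)) * HL n = (HL n).derivativeFun)
    (hpcy : (PowerSeries.mk fun j => pcy (j + 1)) =
      (PowerSeries.mk fun j => p (j + 1)) * EL n)
    (hphy : (PowerSeries.mk fun j => phy (j + 1)) =
      (PowerSeries.mk fun j => pt (j + 1)) * EtL n)
    (k : ℕ) (hk : n ≤ k) :
    pcy k = ∑ i ∈ Finset.range k, ((k - n).choose i : Lam n) * (-y0L n) ^ i * phy (k - i) := by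
  obtain ⟨K, rfl⟩ : ∃ K, k = K + 1 := ⟨k - 1, by omega⟩
  obtain ⟨m2, hm2⟩ : ∃ m2, K + 1 = n + m2 := ⟨K + 1 - n, by omega⟩
  have hm2' : K + 1 - n = m2 := by omega
  have hg := hgG n
  -- constant coefficient of H
  have hH0 : constantCoeff (HL n) = 1 := by
    rw [← coeff_zero_eq_constantCoeff_apply, show HL n = substS (gL n) (CL n) from rfl,
      coeff_substS]
    simp [CL, cL]
  have hHne : HL n ≠ 0 := by
    intro h
    rw [h, map_zero] at hH0
    exact one_ne_zero hH0.symm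
  -- step 4 : Pt = S P * G'
  have st4 : (PowerSeries.mk fun j => pt (j + 1)) =
      substS (gL n) (PowerSeries.mk fun j => p (j + 1)) * (gL n).derivativeFun := by
    apply mul_right_cancel₀ hHne
    rw [hpt, show HL n = substS (gL n) (CL n) from rfl, substS_deriv hg, ← hp, substS_mul hg]
    ring
  -- step 5 : Ẽ = S E * D^n
  have hGD : gL n * DL n = X := by rw [GXW, mul_assoc, WD, mul_one]
  have st5 : EtL n = substS (gL n) (EL n) * DL n ^ n := by
    have hprod : substS (gL n) (EL n)
        = ∏ i : Fin n, (1 + PowerSeries.C (yL n i) * gL n) := by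
      rw [show EL n = ∏ i : Fin n, (1 + PowerSeries.C (yL n i) * X) from rfl]
      rw [show substS (gL n) (∏ i : Fin n, (1 + PowerSeries.C (yL n i) * X))
          = substSM hg (∏ i : Fin n, (1 + PowerSeries.C (yL n i) * X)) from rfl,
        map_prod]
      refine Finset.prod_congr rfl fun i _ => ?_
      show substS (gL n) _ = _
      rw [substS_add, substS_one, substS_mul hg, substS_C, substS_X hg]
    calc EtL n = ∏ i : Fin n, ((1 + PowerSeries.C (yL n i) * gL n) * DL n) := by
          rw [EtL]
          refine Finset.prod_congr rfl fun i _ => ?_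
          rw [add_mul, one_mul, mul_assoc, hGD, DL, map_sub]
          ring
      _ = substS (gL n) (EL n) * DL n ^ n := by
          rw [Finset.prod_mul_distrib, Finset.prod_const, Finset.card_univ, Fintype.card_fin,
            hprod]
  -- step 6 : B * D^2 = S A * D^n
  have h2 : WL n * DL n = 1 := WD n
  have st6 : (PowerSeries.mk fun j => phy (j + 1)) * DL n ^ 2
      = substS (gL n) (PowerSeries.mk fun j => pcy (j + 1)) * DL n ^ n := by
    rw [hpcy, substS_mul hg, hphy, st4, st5, derivG]
    linear_combination (substS (gL n) (PowerSeries.mk fun j => p (j + 1)) *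
      substS (gL n) (EL n) * DL n ^ n * (WL n * DL n + 1)) * h2
  -- step 7
  have st7 : (PowerSeries.mk fun j => phy (j + 1)) * DL n ^ m2
      = substS (gL n) (PowerSeries.mk fun j => pcy (j + 1))
        * (DL n ^ (K + 1) * (WL n * WL n)) := by
    rw [hm2, pow_add]
    linear_combination (DL n ^ m2 * WL n * WL n) * st6
      - ((PowerSeries.mk fun j => phy (j + 1)) * DL n ^ m2 * (WL n * DL n + 1)) * h2
  -- coefficient computation
  have hWDp : ∀ s : ℕ, WL n ^ s * DL n ^ s = 1 := fun s => by rw [← mul_pow, h2, one_pow]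
  have hcoef : ∀ j, j < K + 1 →
      coeff K (gL n ^ j * (DL n ^ (K + 1) * (WL n * WL n))) =
        if j = K then 1 else 0 := by
    intro j hj
    rcases eq_or_ne j K with rfl | hne
    · have hE : gL n ^ j * (DL n ^ (j + 1) * (WL n * WL n)) = X ^ j * WL n := by
        rw [GXW, mul_pow]
        linear_combination (X ^ j * WL n) * hWDp (j + 1)
      rw [hE, if_pos rfl, PowerSeries.coeff_X_pow_mul', if_pos le_rfl, Nat.sub_self]
      simp [WL]
    · obtain ⟨m, hm⟩ : ∃ m, K + 1 = j + 2 + m := ⟨K - 1 - j, by omega⟩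
      have hE : gL n ^ j * (DL n ^ (K + 1) * (WL n * WL n)) = X ^ j * DL n ^ m := by
        rw [GXW, mul_pow, hm, pow_add]
        linear_combination (X ^ j * DL n ^ m) * hWDp (j + 2)
      rw [hE, if_neg hne, PowerSeries.coeff_X_pow_mul', if_pos (by omega), coeff_D_pow,
        Nat.choose_eq_zero_of_lt (by omega), Nat.cast_zero, zero_mul]
  -- left-hand side
  have lhs_eq : coeff K ((PowerSeries.mk fun j => phy (j + 1)) * DL n ^ m2)
      = pcy (K + 1) := by
    rw [st7, coeff_substS_mul hg]
    rw [Finset.sum_congr rfl (fun j hj => by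
      rw [hcoef j (Finset.mem_range.mp hj), coeff_mk, mul_ite, mul_one, mul_zero])]
    rw [Finset.sum_ite_eq' (Finset.range (K + 1)) K (fun j => pcy (j + 1))]
    simp
  -- right-hand side
  rw [hm2', ← lhs_eq, PowerSeries.coeff_mul,
    Finset.Nat.sum_antidiagonal_eq_sum_range_succ
      (fun a b => coeff a (PowerSeries.mk fun j => phy (j + 1))
        * coeff b (DL n ^ m2)) K,
    ← Finset.sum_range_reflect]
  refine Finset.sum_congr rfl fun i hi => ?_
  have hi' := Finset.mem_range.mp hi
  simp only [Nat.succ_sub_one, Nat.add_sub_cancel, coeff_mk]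
  rw [coeff_D_pow, show K - (K - i) = i from by omega, show K - i + 1 = K + 1 - i from by omega]
  ring
end

section
/- In the chain of rings ℤ[y] ⊆ Λ[y] where Λ = ℤ[c₁,c₂,...] and y = (y₁,...,yₙ): the ℤ[y]-algebra automorphism of Λ[y] sending p_k(c) to p_k(c) - (-1)^k p_k(y), where p_k(y) = y₁ᵏ + ··· + yₙᵏ, maps p_k(c|y) to p_k(c|y) + k·e_k(y₁,...,yₙ) for every k ≥ 1. -/
/-- `e_j(y₁,…,yₙ)` (zero for `j > n`). -/
noncomputable def esyL (n j : ℕ) : Lam n :=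
  ∑ S ∈ (Finset.univ : Finset (Fin n)).powersetCard j, ∏ i ∈ S, yL n i

open Finset MvPolynomial in
lemma newton_icc (σ : Type*) [Fintype σ] (R : Type*) [CommRing R] (k : ℕ) :
    ∑ i ∈ Finset.Icc 1 k, (-1 : MvPolynomial σ R) ^ i * psum σ R i * esymm σ R (k - i) =
      -(k : MvPolynomial σ R) * esymm σ R k := by
  have h := MvPolynomial.mul_esymm_eq_sum σ R k
  have h2 : ∑ a ∈ Finset.HasAntidiagonal.antidiagonal k with a.1 < k,
      (-1 : MvPolynomial σ R) ^ a.1 * esymm σ R a.1 * psum σ R a.2 =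
      ∑ i ∈ Finset.Icc 1 k, (-1 : MvPolynomial σ R) ^ (k - i) * esymm σ R (k - i) * psum σ R i := by
    apply Finset.sum_nbij' (fun a => a.2) (fun i => (k - i, i))
    · intro a ha
      simp only [mem_filter, Finset.HasAntidiagonal.mem_antidiagonal] at ha
      simp only [Finset.mem_Icc]
      omega
    · intro i hi
      simp only [Finset.mem_Icc] at hi
      simp only [mem_filter, Finset.HasAntidiagonal.mem_antidiagonal]
      omega
    · intro a ha
      simp only [mem_filter, Finset.HasAntidiagonal.mem_antidiagonal] at ha
      exact Prod.ext (by omega) rfl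
    · intro i hi; rfl
    · intro a ha
      simp only [mem_filter, Finset.HasAntidiagonal.mem_antidiagonal] at ha
      have : a.1 = k - a.2 := by omega
      rw [this]
  rw [h2] at h
  rw [Finset.mul_sum] at h
  have h3 : ∀ i ∈ Finset.Icc 1 k,
      (-1 : MvPolynomial σ R) ^ (k+1) * ((-1) ^ (k - i) * esymm σ R (k - i) * psum σ R i)
        = -((-1 : MvPolynomial σ R) ^ i * psum σ R i * esymm σ R (k - i)) := by
    intro i hi
    simp only [Finset.mem_Icc] at hi
    have : (-1 : MvPolynomial σ R) ^ (k+1) * (-1) ^ (k - i) = -(-1)^i := by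
      rw [← pow_add]
      have hh : k + 1 + (k - i) = 2 * (k - i) + i + 1 := by omega
      rw [hh, pow_succ, pow_add, pow_mul]
      simp
    calc (-1 : MvPolynomial σ R) ^ (k+1) * ((-1) ^ (k - i) * esymm σ R (k - i) * psum σ R i)
        = ((-1 : MvPolynomial σ R) ^ (k+1) * (-1) ^ (k - i)) * (esymm σ R (k - i) * psum σ R i) := by
          ring
      _ = -((-1 : MvPolynomial σ R) ^ i * psum σ R i * esymm σ R (k - i)) := by rw [this]; ring
  rw [Finset.sum_congr rfl h3, Finset.sum_neg_distrib] at h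
  linear_combination h

open MvPolynomial in
lemma rename_esymm_esyL (n j : ℕ) :
    rename (Sum.inr : Fin n → ℕ ⊕ Fin n) (esymm (Fin n) ℤ j) = esyL n j := by
  simp [esymm, esyL, yL]

open MvPolynomial in
lemma rename_psum_yL (n i : ℕ) :
    rename (Sum.inr : Fin n → ℕ ⊕ Fin n) (psum (Fin n) ℤ i) = ∑ j : Fin n, yL n j ^ i := by
  simp [psum, yL]

open MvPolynomial in
lemma newton_Lam (n k : ℕ) :
    ∑ i ∈ Finset.Icc 1 k, (-1 : Lam n) ^ i * (∑ j : Fin n, yL n j ^ i) * esyL n (k - i) =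
      -(k : Lam n) * esyL n k := by
  have h := congrArg (rename (Sum.inr : Fin n → ℕ ⊕ Fin n)) (newton_icc (Fin n) ℤ k)
  simpa [map_sum, map_mul, map_neg, map_pow, rename_esymm_esyL, rename_psum_yL] using h

/-- Any `ℤ[y]`-algebra automorphism `φ` of `Λ[y]` sending `p_k(c) ↦ p_k(c) - (-1)^k p_k(y)`
maps `p_k(c|y) = Σ_{i=1}^k p_i(c) e_{k-i}(y)` to `p_k(c|y) + k·e_k(y)`, for all `k ≥ 1`. -/
theorem stmt11 (n : ℕ) (hn : 0 < n) (p pcy : ℕ → Lam n)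
    (hp : (PowerSeries.mk fun j => p (j + 1)) * PowerSeries.mk (cL n) =
      (PowerSeries.mk (cL n)).derivativeFun)
    (hpcy : ∀ k, pcy k = ∑ i ∈ Finset.Icc 1 k, p i * esyL n (k - i))
    (φ : Lam n ≃ₐ[ℤ] Lam n)
    (hφy : ∀ i, φ (yL n i) = yL n i)
    (hφp : ∀ k, 1 ≤ k → φ (p k) = p k - (-1) ^ k * ∑ i : Fin n, yL n i ^ k)
    (k : ℕ) (hk : 1 ≤ k) :
    φ (pcy k) = pcy k + (k : Lam n) * esyL n k := by
  have hφe : ∀ j, φ (esyL n j) = esyL n j := by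
    intro j
    simp [esyL, map_sum, map_prod, hφy]
  rw [hpcy k, map_sum]
  have step : ∀ i ∈ Finset.Icc 1 k,
      φ (p i * esyL n (k - i)) =
        p i * esyL n (k - i) - (-1) ^ i * (∑ j : Fin n, yL n j ^ i) * esyL n (k - i) := by
    intro i hi
    simp only [Finset.mem_Icc] at hi
    rw [map_mul, hφp i hi.1, hφe]
    ring
  rw [Finset.sum_congr rfl step, Finset.sum_sub_distrib, newton_Lam, ← hpcy k]
  ring
end

section
/- For a partition λ with r parts, the double monomial symmetric function m_λ(ξ|a) := Σ_{(1^r) ⊆ α ⊆ λ} (n(α)/n(λ)) e_{λ-α}(a) m_α(ξ) has integer coefficients, i.e. lies in Λ_ξ[a₁,a₂,...] with Λ_ξ the ring of symmetric functions over ℤ; equivalently, m_λ(ξ|a) equals the sum of σ((ξ|a)^λ) over all distinct permutations σ of the monomial (ξ|a)^λ = Π_{i=1}^r ξ_i(ξ_i+a₁)···(ξ_i+a_{λ_i-1}) (where σ permutes the ξ variables). -/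
open Equiv

/-- `ℤ[ξ₁,…,ξ_N, a₁,a₂,…]`: `X (inl i)` is `ξ_{i+1}`, `X (inr m)` is `a_m` (`m ≥ 1`). -/
abbrev XiA (N : ℕ) := MvPolynomial (Fin N ⊕ ℕ) ℤ

/-- The same ring with `ℚ` coefficients. -/
abbrev XiAQ (N : ℕ) := MvPolynomial (Fin N ⊕ ℕ) ℚ

/-- `a₀ := 0`, `a_m` for `m ≥ 1` (so that `ξ(ξ+a₁)⋯(ξ+a_{k-1}) = Π_{m<k}(ξ + a_m)`). -/
noncomputable def aV0 (N : ℕ) : ℕ → XiA N :=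
  fun m => if m = 0 then 0 else MvPolynomial.X (.inr m)

/-- For an exponent vector `μ`, the product `Π_j Π_{m<μ_j} (ξ_j + a_m)`, i.e. the
"monomial" `(ξ|a)^μ`. -/
noncomputable def xiaMonomial (N : ℕ) (μ : Fin N → ℕ) : XiA N :=
  ∏ j : Fin N, ∏ m ∈ Finset.range (μ j), (MvPolynomial.X (.inl j) + aV0 N m)

/-- `e_j(a₁,…,a_m)` with `ℚ` coefficients. -/
noncomputable def esymAQ (N m j : ℕ) : XiAQ N :=
  ∑ S ∈ (Finset.Icc 1 m).powersetCard j, ∏ t ∈ S, MvPolynomial.X (.inr t)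

/-- The monomial symmetric function `m_α(ξ)` (in `N` variables, `ℚ` coefficients):
the sum of the distinct permutations of the monomial `ξ^α` (extended by zeros). -/
noncomputable def msymQ (N r : ℕ) (hr : r ≤ N) (α : Fin r → ℕ) : XiAQ N :=
  ∑ μ ∈ Finset.image
      (fun σ : Perm (Fin N) =>
        (fun j : Fin N => if h : (j : ℕ) < r then α ⟨j, h⟩ else 0) ∘ σ)
      Finset.univ,
    ∏ j : Fin N, MvPolynomial.X (Sum.inl j : Fin N ⊕ ℕ) ^ μ j

/-- `n(α) = Π_v (number of occurrences of v in α)!`. -/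
noncomputable def nperm (r : ℕ) (α : Fin r → ℕ) : ℕ :=
  ∏ v ∈ Finset.image α Finset.univ,
    (Finset.univ.filter fun i => α i = v).card.factorial

/-- the set of possible values of a component of β given μ_j = k -/
def sset (k : ℕ) : Finset ℕ := if k = 0 then {0} else Finset.Icc 1 k

lemma esymAQ_zero_zero (N : ℕ) : esymAQ N 0 0 = 1 := by
  simp [esymAQ]

lemma onevar (N : ℕ) (j : Fin N) (k : ℕ) :
    MvPolynomial.map (Int.castRingHom ℚ)
        (∏ m ∈ Finset.range k, (MvPolynomial.X (.inl j) + aV0 N m)) =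
      ∑ t ∈ sset k, esymAQ N (k - 1) (k - t) * MvPolynomial.X (Sum.inl j : Fin N ⊕ ℕ) ^ t := by
  rcases Nat.eq_zero_or_pos k with rfl | hk
  · simp [sset, esymAQ_zero_zero]
  -- push map inside
  have hmap : MvPolynomial.map (Int.castRingHom ℚ)
      (∏ m ∈ Finset.range k, (MvPolynomial.X (.inl j) + aV0 N m)) =
      ∏ m ∈ Finset.range k, (MvPolynomial.X (.inl j) +
        (if m = 0 then 0 else MvPolynomial.X (.inr m) : XiAQ N)) := by
    rw [map_prod]
    refine Finset.prod_congr rfl fun m _ => ?_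
    rw [map_add, MvPolynomial.map_X, aV0]
    split <;> simp
  rw [hmap]
  -- split off m = 0
  have hrange : Finset.range k = insert 0 (Finset.Icc 1 (k - 1)) := by
    ext m
    simp only [Finset.mem_range, Finset.mem_insert, Finset.mem_Icc]
    omega
  rw [hrange, Finset.prod_insert (by simp)]
  simp only [if_pos rfl, add_zero]
  have h2 : ∏ m ∈ Finset.Icc 1 (k-1), (MvPolynomial.X (.inl j) +
        (if m = 0 then 0 else MvPolynomial.X (.inr m) : XiAQ N)) =
      ∏ m ∈ Finset.Icc 1 (k-1), ((MvPolynomial.X (.inr m) : XiAQ N) + MvPolynomial.X (.inl j)) := by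
    refine Finset.prod_congr rfl fun m hm => ?_
    rw [Finset.mem_Icc] at hm
    rw [if_neg (by omega), add_comm]
  rw [h2, Finset.prod_add, Finset.sum_powerset]
  have hcard : (Finset.Icc 1 (k-1)).card = k - 1 := by
    rw [Nat.card_Icc]; omega
  rw [hcard]
  -- LHS : X * Σ_{d ∈ range k} Σ_{t ∈ powersetCard d} (∏ a) * X^{(k-1)-d}
  rw [Finset.mul_sum]
  have hkk : k - 1 + 1 = k := by omega
  rw [hkk]
  -- reindex RHS: t ∈ Icc 1 k  ↔ d = k - t ∈ range k
  rw [show sset k = Finset.Icc 1 k from if_neg (by omega)]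
  refine Finset.sum_nbij' (fun d => k - d) (fun t => k - t) ?_ ?_ ?_ ?_ ?_
  · intro d hd; simp only [Finset.mem_range] at hd; simp only [Finset.mem_Icc]; omega
  · intro t ht; simp only [Finset.mem_Icc] at ht; simp only [Finset.mem_range]; omega
  · intro d hd; simp only [Finset.mem_range] at hd; show k - (k - d) = d; omega
  · intro t ht; simp only [Finset.mem_Icc] at ht; show k - (k - t) = t; omega
  · intro d hd
    simp only [Finset.mem_range] at hd
    show _ = esymAQ N (k-1) (k - (k - d)) * _ ^ (k - d)
    have h1 : k - (k - d) = d := by omega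
    rw [h1, esymAQ, Finset.sum_mul, Finset.mul_sum]
    refine Finset.sum_congr rfl fun S hS => ?_
    rw [Finset.mem_powersetCard] at hS
    have hX : ∏ i ∈ Finset.Icc 1 (k-1) \ S, (MvPolynomial.X (Sum.inl j) : XiAQ N) =
        MvPolynomial.X (Sum.inl j) ^ (k - 1 - d) := by
      rw [Finset.prod_const, Finset.card_sdiff_of_subset hS.1, hcard, hS.2]
    rw [hX]
    simp only [ite_true, add_zero]
    rw [show MvPolynomial.X (Sum.inl j) *
        ((∏ i ∈ S, (MvPolynomial.X (Sum.inr i) : XiAQ N)) * MvPolynomial.X (Sum.inl j) ^ (k-1-d)) =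
        (∏ i ∈ S, (MvPolynomial.X (Sum.inr i) : XiAQ N)) *
          (MvPolynomial.X (Sum.inl j) ^ (k-1-d) * MvPolynomial.X (Sum.inl j)) from by ring,
      ← pow_succ (MvPolynomial.X (Sum.inl j) : XiAQ N)]
    have h2 : k - 1 - d + 1 = k - d := by omega
    rw [h2]

lemma xia_expand (N : ℕ) (μ : Fin N → ℕ) :
    MvPolynomial.map (Int.castRingHom ℚ) (xiaMonomial N μ) =
      ∑ β ∈ Fintype.piFinset (fun j => sset (μ j)),
        (∏ j : Fin N, esymAQ N (μ j - 1) (μ j - β j)) *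
          ∏ j : Fin N, MvPolynomial.X (Sum.inl j : Fin N ⊕ ℕ) ^ β j := by
  rw [xiaMonomial, map_prod]
  have h1 : ∀ j : Fin N, MvPolynomial.map (Int.castRingHom ℚ)
        (∏ m ∈ Finset.range (μ j), (MvPolynomial.X (.inl j) + aV0 N m)) =
      ∑ t ∈ sset (μ j), esymAQ N (μ j - 1) (μ j - t) *
        MvPolynomial.X (Sum.inl j : Fin N ⊕ ℕ) ^ t := fun j => onevar N j (μ j)
  rw [Finset.prod_congr rfl (fun j _ => h1 j), Finset.prod_univ_sum]
  exact Finset.sum_congr rfl fun β _ => (Finset.prod_mul_distrib)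

/-- extension of a vector on Fin r by zeros -/
def extv (N r : ℕ) (hr : r ≤ N) (α : Fin r → ℕ) : Fin N → ℕ :=
  fun j => if h : (j : ℕ) < r then α ⟨j, h⟩ else 0

lemma prod_extv {M : Type*} [CommMonoid M] (N r : ℕ) (hr : r ≤ N) (g : Fin r → M) :
    (∏ j : Fin N, if h : (j : ℕ) < r then g ⟨j, h⟩ else 1) = ∏ i : Fin r, g i := by
  let f : ℕ → M := fun j => if h : j < r then g ⟨j, h⟩ else 1
  have h1 : (∏ j : Fin N, if h : (j : ℕ) < r then g ⟨j, h⟩ else 1) = ∏ j : Fin N, f (j : ℕ) :=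
    rfl
  have h2 : ∏ i : Fin r, g i = ∏ i : Fin r, f (i : ℕ) := by
    refine Finset.prod_congr rfl fun i _ => ?_
    simp only [f, dif_pos i.2, Fin.eta]
  rw [h1, h2, Fin.prod_univ_eq_prod_range f N, Fin.prod_univ_eq_prod_range f r]
  refine (Finset.prod_subset (Finset.range_subset_range.2 hr) fun x _ hx => ?_).symm
  simp only [Finset.mem_range, not_lt] at hx
  simp only [f]
  rw [dif_neg (by omega : ¬ x < r)]

lemma esym_prod (N r : ℕ) (hr : r ≤ N) (lam α : Fin r → ℕ) :
    ∏ j : Fin N, esymAQ N (extv N r hr lam j - 1) (extv N r hr lam j - extv N r hr α j) =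
      ∏ i : Fin r, esymAQ N (lam i - 1) (lam i - α i) := by
  rw [← prod_extv N r hr (fun i => esymAQ N (lam i - 1) (lam i - α i))]
  refine Finset.prod_congr rfl fun j _ => ?_
  by_cases h : (j : ℕ) < r
  · rw [dif_pos h]; simp only [extv, dif_pos h]
  · rw [dif_neg h]; simp only [extv, dif_neg h]; exact esymAQ_zero_zero N

lemma key_s16 (N r : ℕ) (hr : r ≤ N) (lam : Fin r → ℕ) (hpos : ∀ i, 0 < lam i) (σ : Perm (Fin N)) :
    MvPolynomial.map (Int.castRingHom ℚ) (xiaMonomial N (extv N r hr lam ∘ σ)) =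
      ∑ α ∈ Fintype.piFinset (fun i : Fin r => Finset.Icc 1 (lam i)),
        (∏ i : Fin r, esymAQ N (lam i - 1) (lam i - α i)) *
          ∏ j : Fin N, MvPolynomial.X (Sum.inl j : Fin N ⊕ ℕ) ^ ((extv N r hr α ∘ σ) j) := by
  rw [xia_expand]
  refine Finset.sum_nbij' (fun β => fun i : Fin r => β (σ⁻¹ ⟨(i : ℕ), lt_of_lt_of_le i.2 hr⟩))
    (fun α => extv N r hr α ∘ σ) ?_ ?_ ?_ ?_ ?_
  · intro β hβ
    rw [Fintype.mem_piFinset] at hβ ⊢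
    intro i
    have h := hβ (σ⁻¹ ⟨(i : ℕ), lt_of_lt_of_le i.2 hr⟩)
    simp only [Function.comp_apply, Equiv.Perm.coe_inv, Equiv.apply_symm_apply, extv] at h
    rw [dif_pos i.2, Fin.eta] at h
    rwa [sset, if_neg (hpos i).ne'] at h
  · intro α hα
    rw [Fintype.mem_piFinset] at hα ⊢
    intro j
    simp only [Function.comp_apply, extv]
    by_cases h : ((σ j : Fin N) : ℕ) < r
    · rw [dif_pos h, dif_pos h, sset, if_neg (hpos ⟨_, h⟩).ne']
      exact hα _
    · rw [dif_neg h, dif_neg h, sset, if_pos rfl]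
      exact Finset.mem_singleton_self 0
  · intro β hβ
    rw [Fintype.mem_piFinset] at hβ
    funext j
    simp only [Function.comp_apply, extv]
    by_cases h : ((σ j : Fin N) : ℕ) < r
    · rw [dif_pos h]
      exact congrArg β (σ.symm_apply_apply j)
    · rw [dif_neg h]
      have h2 : β j ∈ sset (extv N r hr lam (σ j)) := hβ j
      rw [show extv N r hr lam (σ j) = 0 from dif_neg h] at h2
      simp only [sset] at h2
      norm_num at h2
      omega
  · intro α hα
    funext i
    simp only [Function.comp_apply, extv, Equiv.Perm.coe_inv, Equiv.apply_symm_apply]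
    rw [dif_pos i.2, Fin.eta]
  · intro β hβ
    rw [Fintype.mem_piFinset] at hβ
    have hβeq : extv N r hr
        (fun i : Fin r => β (σ⁻¹ ⟨(i : ℕ), lt_of_lt_of_le i.2 hr⟩)) ∘ σ = β := by
      funext j
      simp only [Function.comp_apply, extv]
      by_cases h : ((σ j : Fin N) : ℕ) < r
      · rw [dif_pos h]
        exact congrArg β (σ.symm_apply_apply j)
      · rw [dif_neg h]
        have h2 : β j ∈ sset (extv N r hr lam (σ j)) := hβ j
        rw [show extv N r hr lam (σ j) = 0 from dif_neg h] at h2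
        simp only [sset] at h2
        norm_num at h2
        omega
    conv_lhs => rw [← hβeq]
    congr 1
    exact (Equiv.prod_comp σ (fun j => esymAQ N (extv N r hr lam j - 1)
      (extv N r hr lam j - extv N r hr
        (fun i : Fin r => β (σ⁻¹ ⟨(i : ℕ), lt_of_lt_of_le i.2 hr⟩)) j))).trans
      (esym_prod N r hr lam _)

lemma fiber_card (N : ℕ) (f : Fin N → ℕ) (σ₀ : Perm (Fin N)) :
    (Finset.univ.filter fun σ : Perm (Fin N) => f ∘ ⇑σ = f ∘ ⇑σ₀).card =
      (Finset.univ.filter fun σ : Perm (Fin N) => f ∘ ⇑σ = f).card := by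
  refine Finset.card_nbij' (fun σ => σ * σ₀⁻¹) (fun τ => τ * σ₀) ?_ ?_ ?_ ?_
  · intro σ hσ
    simp only [Finset.mem_coe, Finset.mem_filter, Finset.mem_univ, true_and] at hσ ⊢
    funext x
    have := congrFun hσ (σ₀⁻¹ x)
    simpa [Equiv.Perm.mul_apply] using this
  · intro τ hτ
    simp only [Finset.mem_coe, Finset.mem_filter, Finset.mem_univ, true_and] at hτ ⊢
    funext x
    have := congrFun hτ (σ₀ x)
    simpa [Equiv.Perm.mul_apply] using this
  · intro σ _; simp [mul_assoc]
  · intro τ _; simp [mul_assoc]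

lemma stab_card (N : ℕ) (f : Fin N → ℕ) :
    (Finset.univ.filter fun σ : Perm (Fin N) => f ∘ ⇑σ = f).card =
      ∏ v ∈ Finset.image f Finset.univ,
        (Finset.univ.filter fun j : Fin N => f j = v).card.factorial := by
  have h := DomMulAct.stabilizer_card' f
  rw [Fintype.card_subtype] at h
  rw [h]
  exact Finset.prod_congr rfl fun v _ => by rw [Fintype.card_subtype]

lemma filter_lt_card (N r : ℕ) (hr : r ≤ N) :
    (Finset.univ.filter fun j : Fin N => (j : ℕ) < r).card = r := by
  have h : (Finset.univ.filter fun j : Fin N => (j : ℕ) < r) =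
      (Finset.univ : Finset (Fin r)).map (Fin.castLEEmb hr) := by
    ext j
    rw [Finset.mem_filter, Finset.mem_map]
    constructor
    · intro hj
      exact ⟨⟨(j : ℕ), hj.2⟩, Finset.mem_univ _, rfl⟩
    · rintro ⟨i, _, rfl⟩
      exact ⟨Finset.mem_univ _, i.2⟩
  rw [h, Finset.card_map, Finset.card_univ, Fintype.card_fin]

lemma fiberN_eq (N r : ℕ) (hr : r ≤ N) (α : Fin r → ℕ) (v : ℕ) (hv : v ≠ 0) :
    (Finset.univ.filter fun j : Fin N => extv N r hr α j = v).card =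
      (Finset.univ.filter fun i : Fin r => α i = v).card := by
  have h : (Finset.univ.filter fun j : Fin N => extv N r hr α j = v) =
      (Finset.univ.filter fun i : Fin r => α i = v).map (Fin.castLEEmb hr) := by
    ext j
    rw [Finset.mem_filter, Finset.mem_map]
    constructor
    · intro hj
      have hj2 := hj.2
      have hjr : (j : ℕ) < r := by
        by_contra hc
        rw [extv, dif_neg hc] at hj2
        exact hv hj2.symm
      refine ⟨⟨(j : ℕ), hjr⟩, ?_, rfl⟩
      rw [Finset.mem_filter]
      refine ⟨Finset.mem_univ _, ?_⟩
      rw [extv, dif_pos hjr] at hj2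
      exact hj2
    · rintro ⟨i, hi, rfl⟩
      rw [Finset.mem_filter] at hi
      refine ⟨Finset.mem_univ _, ?_⟩
      rw [show ((Fin.castLEEmb hr) i) = (⟨(i : ℕ), lt_of_lt_of_le i.2 hr⟩ : Fin N) from rfl,
        extv, dif_pos (show ((⟨(i : ℕ), lt_of_lt_of_le i.2 hr⟩ : Fin N) : ℕ) < r from i.2)]
      exact hi.2
  rw [h, Finset.card_map]

lemma fiber0_card (N r : ℕ) (hr : r ≤ N) (α : Fin r → ℕ) (hpos : ∀ i, 0 < α i) :
    (Finset.univ.filter fun j : Fin N => extv N r hr α j = 0).card = N - r := by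
  have h1 : (Finset.univ.filter fun j : Fin N => extv N r hr α j = 0) =
      (Finset.univ.filter fun j : Fin N => ¬ ((j : ℕ) < r)) := by
    ext j
    simp only [Finset.mem_filter, Finset.mem_univ, true_and]
    simp only [extv]
    by_cases h : (j : ℕ) < r
    · rw [dif_pos h]
      simp only [h, not_true_eq_false, iff_false]
      exact (hpos _).ne'
    · rw [dif_neg h]
      simp [h]
  rw [h1]
  have h2 := Finset.card_filter_add_card_filter_not
    (s := (Finset.univ : Finset (Fin N))) (p := fun j : Fin N => (j : ℕ) < r)
  rw [filter_lt_card N r hr, Finset.card_univ, Fintype.card_fin] at h2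
  omega

lemma stab_extv (N r : ℕ) (hr : r ≤ N) (α : Fin r → ℕ) (hpos : ∀ i, 0 < α i) :
    (Finset.univ.filter
        fun σ : Perm (Fin N) => extv N r hr α ∘ ⇑σ = extv N r hr α).card =
      nperm r α * (N - r).factorial := by
  rw [stab_card, nperm]
  rcases hr.eq_or_lt with rfl | hlt
  · -- r = N
    have himg : Finset.image (extv r r hr α) Finset.univ = Finset.image α Finset.univ := by
      ext v
      simp only [Finset.mem_image, Finset.mem_univ, true_and, extv]
      constructor
      · rintro ⟨j, hj⟩
        rw [dif_pos j.2] at hj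
        exact ⟨_, hj⟩
      · rintro ⟨i, hi⟩
        refine ⟨⟨(i : ℕ), i.2⟩, ?_⟩
        rw [dif_pos (show (((⟨(i : ℕ), i.2⟩ : Fin r) : Fin r) : ℕ) < r from i.2)]
        rwa [Fin.eta]
    rw [himg, Nat.sub_self, Nat.factorial_zero, mul_one]
    refine Finset.prod_congr rfl fun v hv => ?_
    simp only [Finset.mem_image, Finset.mem_univ, true_and] at hv
    obtain ⟨i, rfl⟩ := hv
    rw [fiberN_eq r r hr α _ (hpos i).ne']
  · -- r < N
    have himg : Finset.image (extv N r hr α) Finset.univ =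
        insert 0 (Finset.image α Finset.univ) := by
      ext v
      simp only [Finset.mem_image, Finset.mem_univ, true_and, Finset.mem_insert, extv]
      constructor
      · rintro ⟨j, hj⟩
        by_cases h : (j : ℕ) < r
        · rw [dif_pos h] at hj
          exact Or.inr ⟨_, hj⟩
        · rw [dif_neg h] at hj
          exact Or.inl hj.symm
      · rintro (rfl | ⟨i, hi⟩)
        · exact ⟨⟨r, hlt⟩, by rw [dif_neg (by simp)]⟩
        · refine ⟨⟨(i : ℕ), lt_of_lt_of_le i.2 hr⟩, ?_⟩
          rw [dif_pos (show (((⟨(i : ℕ), lt_of_lt_of_le i.2 hr⟩ : Fin N)) : ℕ) < r from i.2)]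
          rwa [Fin.eta]
    have h0 : (0 : ℕ) ∉ Finset.image α Finset.univ := by
      simp only [Finset.mem_image, Finset.mem_univ, true_and, not_exists]
      exact fun i => (hpos i).ne'
    rw [himg, Finset.prod_insert h0, fiber0_card N r hr α hpos, mul_comm]
    congr 1
    refine Finset.prod_congr rfl fun v hv => ?_
    simp only [Finset.mem_image, Finset.mem_univ, true_and] at hv
    obtain ⟨i, rfl⟩ := hv
    rw [fiberN_eq N r hr α _ (hpos i).ne']

lemma msymQ_smul (N r : ℕ) (hr : r ≤ N) (α : Fin r → ℕ) (hpos : ∀ i, 0 < α i) :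
    ∑ σ : Perm (Fin N), ∏ j : Fin N,
        MvPolynomial.X (Sum.inl j : Fin N ⊕ ℕ) ^ ((extv N r hr α ∘ σ) j) =
      (nperm r α * (N - r).factorial) • msymQ N r hr α := by
  rw [msymQ]
  have h1 : (fun σ : Perm (Fin N) =>
      (fun j : Fin N => if h : (j : ℕ) < r then α ⟨j, h⟩ else 0) ∘ ⇑σ)
      = fun σ : Perm (Fin N) => extv N r hr α ∘ ⇑σ := rfl
  rw [h1, Finset.smul_sum]
  rw [Finset.sum_comp
    (fun μ : Fin N → ℕ => ∏ j : Fin N, MvPolynomial.X (Sum.inl j : Fin N ⊕ ℕ) ^ μ j)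
    (fun σ : Perm (Fin N) => extv N r hr α ∘ ⇑σ)]
  refine Finset.sum_congr rfl fun b hb => ?_
  obtain ⟨σ₀, _, rfl⟩ := Finset.mem_image.1 hb
  rw [fiber_card N (extv N r hr α) σ₀, stab_extv N r hr α hpos]

set_option synthInstance.maxHeartbeats 1000000 in
/-- The double monomial symmetric function
`m_λ(ξ|a) = Σ_{(1^r)⊆α⊆λ} (n(α)/n(λ)) e_{λ-α}(a) m_α(ξ)` (a priori with rational
coefficients) equals the sum of the distinct permutations of `(ξ|a)^λ`; in particular it
has integer coefficients. -/
theorem stmt16 (N r : ℕ) (hr : r ≤ N) (lam : Fin r → ℕ)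
    (hmono : Antitone lam) (hpos : ∀ i, 0 < lam i) :
    (∑ α ∈ Fintype.piFinset (fun i : Fin r => Finset.Icc 1 (lam i)),
        ((nperm r α : ℚ) / (nperm r lam : ℚ)) •
          ((∏ i : Fin r, esymAQ N (lam i - 1) (lam i - α i)) * msymQ N r hr α)) =
      MvPolynomial.map (Int.castRingHom ℚ)
        (∑ μ ∈ Finset.image
            (fun σ : Perm (Fin N) =>
              (fun j : Fin N => if h : (j : ℕ) < r then lam ⟨j, h⟩ else 0) ∘ σ)
            Finset.univ,
          xiaMonomial N μ) := by
  have hnl : (nperm r lam : ℚ) ≠ 0 := by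
    rw [Nat.cast_ne_zero, nperm]
    exact Finset.prod_ne_zero_iff.2 fun v _ => (Nat.factorial_pos _).ne'
  have hfac : ((N - r).factorial : ℚ) ≠ 0 := Nat.cast_ne_zero.2 (Nat.factorial_pos _).ne'
  have hc0 : ((nperm r lam * (N - r).factorial : ℕ) : ℚ) ≠ 0 := by
    push_cast; exact mul_ne_zero hnl hfac
  apply smul_right_injective (XiAQ N) hc0
  show ((nperm r lam * (N - r).factorial : ℕ) : ℚ) • _
    = ((nperm r lam * (N - r).factorial : ℕ) : ℚ) • _
  have hrw : (fun j : Fin N => if h : (j : ℕ) < r then lam ⟨j, h⟩ else 0)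
      = extv N r hr lam := rfl
  rw [hrw]
  -- right-hand side
  have hR : ∑ σ : Perm (Fin N),
      MvPolynomial.map (Int.castRingHom ℚ) (xiaMonomial N (extv N r hr lam ∘ ⇑σ))
      = (nperm r lam * (N - r).factorial) •
        ∑ b ∈ Finset.image (fun σ : Perm (Fin N) => extv N r hr lam ∘ ⇑σ) Finset.univ,
          MvPolynomial.map (Int.castRingHom ℚ) (xiaMonomial N b) := by
    rw [Finset.sum_comp (fun b => MvPolynomial.map (Int.castRingHom ℚ) (xiaMonomial N b))
      (fun σ : Perm (Fin N) => extv N r hr lam ∘ ⇑σ), Finset.smul_sum]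
    refine Finset.sum_congr rfl fun b hb => ?_
    obtain ⟨σ₀, _, rfl⟩ := Finset.mem_image.1 hb
    rw [fiber_card N (extv N r hr lam) σ₀, stab_extv N r hr lam hpos]
  -- left-hand side, per α
  have hL : ∀ α ∈ Fintype.piFinset (fun i : Fin r => Finset.Icc 1 (lam i)),
      ((nperm r lam * (N - r).factorial : ℕ) : ℚ) • (((nperm r α : ℚ) / (nperm r lam : ℚ)) •
        ((∏ i : Fin r, esymAQ N (lam i - 1) (lam i - α i)) * msymQ N r hr α)) =
      ∑ σ : Perm (Fin N), (∏ i : Fin r, esymAQ N (lam i - 1) (lam i - α i)) *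
        ∏ j : Fin N, MvPolynomial.X (Sum.inl j : Fin N ⊕ ℕ) ^ ((extv N r hr α ∘ σ) j) := by
    intro α hα
    have hpa : ∀ i, 0 < α i := by
      intro i
      have h := (Fintype.mem_piFinset.1 hα) i
      rw [Finset.mem_Icc] at h
      omega
    rw [smul_smul]
    have harith : ((nperm r lam * (N - r).factorial : ℕ) : ℚ) *
        ((nperm r α : ℚ) / (nperm r lam : ℚ))
        = ((nperm r α * (N - r).factorial : ℕ) : ℚ) := by
      push_cast
      field_simp
    rw [harith, Nat.cast_smul_eq_nsmul, ← mul_smul_comm, ← msymQ_smul N r hr α hpa,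
      Finset.mul_sum]
  rw [Finset.smul_sum, Finset.sum_congr rfl hL, Finset.sum_comm]
  conv_rhs => rw [map_sum]
  rw [Nat.cast_smul_eq_nsmul, ← hR]
  exact Finset.sum_congr rfl fun σ _ => (key_s16 N r hr lam hpos σ).symm
end
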